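/- Let L₃ = {(a²b)ᵐ·(ab²)ⁿ·(a²b)² : m ≥ 3, n ≥ 1} over the alphabet {a, b}. Then the syntactic class of the word a²b with respect to L₃ is the singleton {a²b}: every nonempty word w over {a, b} that is syntactically equivalent to a²b with respect to L₃ equals a²b. -/
import Mathlib


/-- The two-letter alphabet `{a, b}`. -/
inductive AB : Type
  | a : AB
  | b : AB

/-- Words over `{a, b}`, as elements of the free monoid (the empty word is `1`). -/
abbrev Word : Type := FreeMonoid AB

/-- The letter `a` as a word. -/
def wa : Word := FreeMonoid.of AB.a

/-- The letter `b` as a word. -/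
def wb : Word := FreeMonoid.of AB.b

/-- Syntactic equivalence of `u` and `v` with respect to the language `L`:
for all (possibly empty) words `p, q`, `p·u·q ∈ L ↔ p·v·q ∈ L`. -/
def SynEq (L : Set Word) (u v : Word) : Prop :=
  ∀ p q : Word, p * u * q ∈ L ↔ p * v * q ∈ L

/-- The language `L₃ = (a²b)²(a²b)⁺(ab²)⁺(a²b)² = {(a²b)ᵐ·(ab²)ⁿ·(a²b)² : m ≥ 3, n ≥ 1}`. -/
def L3 : Set Word :=
  {w | ∃ m n : ℕ, 3 ≤ m ∧ 1 ≤ n ∧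
    w = (wa ^ 2 * wb) ^ m * (wa * wb ^ 2) ^ n * (wa ^ 2 * wb) ^ 2}

/- ### Auxiliary material -/

deriving instance DecidableEq for AB

/-- Length of a word. -/
def wlen : Word → ℕ := fun w => (FreeMonoid.toList w).length

/-- Number of occurrences of the letter `b` in a word. -/
def nB : Word → ℕ := fun w => (FreeMonoid.toList w).count AB.b

@[simp] lemma wlen_mul (u v : Word) : wlen (u*v) = wlen u + wlen v := by
  simp [wlen, FreeMonoid.toList_mul]

@[simp] lemma nB_mul (u v : Word) : nB (u*v) = nB u + nB v := by
  simp [nB, FreeMonoid.toList_mul]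

@[simp] lemma wlen_pow (u : Word) (n : ℕ) : wlen (u^n) = n * wlen u := by
  induction n with
  | zero => simp [wlen, FreeMonoid.toList_one]
  | succ k ih => rw [pow_succ]; simp [ih]; ring

@[simp] lemma nB_pow (u : Word) (n : ℕ) : nB (u^n) = n * nB u := by
  induction n with
  | zero => simp [nB, FreeMonoid.toList_one]
  | succ k ih => rw [pow_succ]; simp [ih]; ring

@[simp] lemma wlen_wa : wlen wa = 1 := rfl
@[simp] lemma wlen_wb : wlen wb = 1 := rfl
@[simp] lemma nB_wa : nB wa = 0 := rfl
@[simp] lemma nB_wb : nB wb = 1 := rfl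

/-- Words starting with different letters are different. -/
lemma a_ne_b (x y : Word) : wa * x ≠ wb * y := by
  intro h
  have h2 := congrArg FreeMonoid.toList h
  rw [wa, wb, FreeMonoid.toList_of_mul, FreeMonoid.toList_of_mul] at h2
  exact AB.noConfusion (List.head_eq_of_cons_eq h2)

/-- Key step A: if `(a²b)²·(a²b)ʲ(ab²)ᵏ·(a²b)²(ab²)(a²b)² ∈ L₃` then `k = 0`. -/
lemma stepA (j k : ℕ)
    (hmem : (wa^2*wb)^2 * ((wa^2*wb)^j * (wa*wb^2)^k) *
      ((wa^2*wb)^2 * ((wa*wb^2) * (wa^2*wb)^2)) ∈ L3) : k = 0 := by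
  obtain ⟨m, n, hm, hn, heq⟩ := hmem
  have hl := congrArg wlen heq
  have hb := congrArg nB heq
  simp at hl hb
  obtain rfl : m = j + 4 := by omega
  obtain rfl : n = k + 1 := by omega
  rcases k with _ | k'
  · rfl
  exfalso
  have e1 : ((wa^2*wb) : Word)^(j+4) = (wa^2*wb)^2 * (wa^2*wb)^j * (wa^2*wb)^2 := by
    rw [← pow_add, ← pow_add]; congr 1; omega
  have e3 : ((wa*wb^2) : Word)^(k'+1+1) = (wa*wb^2) * (wa*wb^2)^(k'+1) := pow_succ' _ _
  have e2 : ((wa*wb^2) : Word)^(k'+1) = (wa*wb^2) * (wa*wb^2)^k' := pow_succ' _ _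
  rw [e1, e3, e2] at heq
  simp only [mul_assoc] at heq
  have c := mul_left_cancel (mul_left_cancel heq)
  simp only [pow_two, mul_assoc] at c
  exact a_ne_b _ _ (mul_left_cancel c).symm

/-- Key step B: if `(a²b)³(ab²)(a²b)·(a²b)ᵗ⁺¹ ∈ L₃` then `t = 0`. -/
lemma stepB (t : ℕ)
    (hmem : (wa^2*wb)^3 * (wa*wb^2) * (wa^2*wb) * (wa^2*wb)^(t+1) ∈ L3) : t = 0 := by
  obtain ⟨m, n, hm, hn, heq⟩ := hmem
  have hl := congrArg wlen heq
  have hb := congrArg nB heq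
  simp at hl hb
  obtain rfl : m = t + 3 := by omega
  obtain rfl : n = 1 := by omega
  rcases t with _ | t'
  · rfl
  exfalso
  have e1 : ((wa^2*wb) : Word)^(t'+1+3) = (wa^2*wb)^3 * (wa^2*wb)^(t'+1) := by
    rw [← pow_add]; congr 1; omega
  have e2 : ((wa^2*wb) : Word)^(t'+1+1) = (wa^2*wb) * (wa^2*wb)^(t'+1) := pow_succ' _ _
  have e3 : ((wa^2*wb) : Word)^(t'+1) = (wa^2*wb) * (wa^2*wb)^t' := pow_succ' _ _
  rw [pow_one, e1, e2, e3] at heq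
  simp only [mul_assoc] at heq
  have c := mul_left_cancel heq
  simp only [pow_two, mul_assoc] at c
  exact a_ne_b _ _ (mul_left_cancel c).symm

/-- the syntactic class of `a²b` with respect to `L₃` is the singleton
`{a²b}`: a nonempty word `w` is syntactically equivalent to `a²b` iff `w = a²b`. -/
theorem synClass_of_a2b_is_singleton (w : Word) (hw : w ≠ 1) :
    SynEq L3 w (wa ^ 2 * wb) ↔ w = wa ^ 2 * wb := by
  constructor
  · intro h
    -- Step 1: `w = (a²b)ʲ(ab²)ᵏ` with `j ≥ 1`.
    have hm1 : (wa^2*wb)^2 * w * ((wa*wb^2) * (wa^2*wb)^2) ∈ L3 :=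
      (h _ _).mpr ⟨3, 1, by norm_num, le_rfl, rfl⟩
    obtain ⟨m, n, hm, hn, heq⟩ := hm1
    have e1 : ((wa^2*wb) : Word)^m = (wa^2*wb)^2 * (wa^2*wb)^(m-2) := by
      rw [← pow_add]; congr 1; omega
    have e2 : ((wa*wb^2) : Word)^n = (wa*wb^2)^(n-1) * (wa*wb^2) := by
      rw [← pow_succ]; congr 1; omega
    rw [e1, e2] at heq
    simp only [mul_assoc] at heq
    have h3 : w * (wa * (wb^2 * (wa^2*wb)^2))
        = ((wa^2*wb)^(m-2) * (wa*wb^2)^(n-1)) * (wa * (wb^2 * (wa^2*wb)^2)) := by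
      rw [mul_assoc]; exact mul_left_cancel heq
    have hw3 : w = (wa^2*wb)^(m-2) * (wa*wb^2)^(n-1) := mul_right_cancel h3
    obtain ⟨j, k, hj, hwjk⟩ :
        ∃ j k : ℕ, 1 ≤ j ∧ w = (wa^2*wb)^j * (wa*wb^2)^k :=
      ⟨m - 2, n - 1, by omega, hw3⟩
    -- Step 2: `k = 0`.
    have hm2 : (wa^2*wb)^2 * w * ((wa^2*wb)^2 * ((wa*wb^2) * (wa^2*wb)^2)) ∈ L3 :=
      (h _ _).mpr ⟨5, 1, by norm_num, le_rfl, rfl⟩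
    rw [hwjk] at hm2
    have hk : k = 0 := stepA j k hm2
    rw [hk, pow_zero, mul_one] at hwjk
    -- Step 3: `j = 1`.
    obtain ⟨t, rfl⟩ : ∃ t, j = t + 1 := ⟨j - 1, by omega⟩
    have hm3 : (wa^2*wb)^3 * (wa*wb^2) * (wa^2*wb) * w * 1 ∈ L3 :=
      (h _ _).mpr ⟨3, 1, by norm_num, le_rfl, rfl⟩
    rw [hwjk, mul_one] at hm3
    have ht : t = 0 := stepB t hm3
    rw [ht, zero_add, pow_one] at hwjk
    exact hwjk
  · rintro rfl
    exact fun p q => Iff.rfl
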